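/- Let a < b be real numbers and let X : ℝ × [a,b] → ℝ be a C¹ function with ∂X/∂y(x,y) > 0 for all (x,y), X(x+1,y) = X(x,y) + 1 for all (x,y), and X(x,a) < x < X(x,b) for all x ∈ ℝ. Then there exists a unique function y : ℝ → (a,b) such that X(x, y(x)) = x for all x ∈ ℝ; moreover y is C¹ and 1-periodic (y(x+1) = y(x) for all x). -/

import Mathlib

/-- **The generating curve of a twist map.**
If `X : ℝ × [a,b] → ℝ` is `C¹` with `∂X/∂y > 0`, `X(x+1,y) = X(x,y) + 1` and
`X(x,a) < x < X(x,b)`, then there is a unique function `y : ℝ → (a,b)` with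
`X(x, y(x)) = x` for all `x`; moreover `y` is `C¹` and `1`-periodic. -/
theorem twist_generating_curve (a b : ℝ) (hab : a < b) (X : ℝ → ℝ → ℝ)
    (hC1 : ContDiffOn ℝ 1 (fun p : ℝ × ℝ => X p.1 p.2) (Set.univ ×ˢ Set.Icc a b))
    (htwist : ∀ x : ℝ, ∀ y ∈ Set.Icc a b, 0 < derivWithin (X x) (Set.Icc a b) y)
    (hper : ∀ x : ℝ, ∀ y ∈ Set.Icc a b, X (x + 1) y = X x y + 1)
    (hbd : ∀ x : ℝ, X x a < x ∧ x < X x b) :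
    ∃ y : ℝ → ℝ,
      (∀ x, y x ∈ Set.Ioo a b) ∧ (∀ x, X x (y x) = x) ∧
      ContDiff ℝ 1 y ∧ (∀ x, y (x + 1) = y x) ∧
      (∀ y' : ℝ → ℝ, (∀ x, y' x ∈ Set.Ioo a b) → (∀ x, X x (y' x) = x) → y' = y) := by
  have hICC : Set.Ioo a b ⊆ Set.Icc a b := Set.Ioo_subset_Icc_self
  -- continuity of each slice
  have hcont : ∀ x : ℝ, ContinuousOn (X x) (Set.Icc a b) := by
    intro x
    have h1 : ContinuousOn (fun p : ℝ × ℝ => X p.1 p.2) (Set.univ ×ˢ Set.Icc a b) :=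
      hC1.continuousOn
    have h2 : ContinuousOn (fun y : ℝ => ((x : ℝ), y)) (Set.Icc a b) :=
      (continuous_const.prodMk continuous_id).continuousOn
    exact h1.comp h2 (fun y hy => ⟨Set.mem_univ _, hy⟩)
  -- strict monotonicity of each slice
  have hmono : ∀ x : ℝ, StrictMonoOn (X x) (Set.Icc a b) := by
    intro x
    apply strictMonoOn_of_deriv_pos (convex_Icc a b) (hcont x)
    intro y hy
    rw [interior_Icc] at hy
    have h := htwist x y (hICC hy)
    rwa [derivWithin_of_mem_nhds (Icc_mem_nhds hy.1 hy.2)] at h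
  -- uniqueness of solutions of `X x · = x` on `Icc a b`
  have huniq : ∀ x : ℝ, ∀ y₁ ∈ Set.Icc a b, ∀ y₂ ∈ Set.Icc a b,
      X x y₁ = X x y₂ → y₁ = y₂ := fun x y₁ h₁ y₂ h₂ h => (hmono x).injOn h₁ h₂ h
  -- existence by the intermediate value theorem
  have hex : ∀ x : ℝ, ∃ y, y ∈ Set.Ioo a b ∧ X x y = x := by
    intro x
    have h := intermediate_value_Ioo (le_of_lt hab) (hcont x)
    have hx : x ∈ Set.Ioo (X x a) (X x b) := ⟨(hbd x).1, (hbd x).2⟩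
    obtain ⟨y, hy, hXy⟩ := h hx
    exact ⟨y, hy, hXy⟩
  choose y hy1 hy2 using hex
  refine ⟨y, hy1, hy2, ?_, ?_, ?_⟩
  · -- smoothness, via the inverse function theorem
    rw [contDiff_iff_contDiffAt]
    intro x₀
    set F : ℝ × ℝ → ℝ := fun p => X p.1 p.2 with hF_def
    set p₀ : ℝ × ℝ := (x₀, y x₀) with hp₀_def
    have hp₀mem : Set.univ ×ˢ Set.Icc a b ∈ nhds p₀ := by
      have : Set.univ ×ˢ Set.Ioo a b ∈ nhds p₀ :=
        (isOpen_univ.prod isOpen_Ioo).mem_nhds ⟨Set.mem_univ _, hy1 x₀⟩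
      exact Filter.mem_of_superset this (Set.prod_mono subset_rfl hICC)
    have hF : ContDiffAt ℝ 1 F p₀ := hC1.contDiffAt hp₀mem
    have hFdiff : DifferentiableAt ℝ F p₀ := hF.differentiableAt one_ne_zero
    set f' : ℝ × ℝ →L[ℝ] ℝ := fderiv ℝ F p₀ with hf'_def
    have hdf : HasFDerivAt F f' p₀ := hFdiff.hasFDerivAt
    set d : ℝ := f' (0, 1) with hd_def
    -- the partial derivative in `y` is `d > 0`
    have hslice : HasDerivAt (X x₀) d (y x₀) := by
      have hδ : HasDerivAt (fun t : ℝ => ((x₀ : ℝ), t)) ((0 : ℝ), (1 : ℝ)) (y x₀) :=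
        (hasDerivAt_const _ _).prodMk (hasDerivAt_id _)
      have := hdf.comp_hasDerivAt (y x₀) hδ
      exact this
    have hdpos : 0 < d := by
      have h := htwist x₀ (y x₀) (hICC (hy1 x₀))
      have heq : derivWithin (X x₀) (Set.Icc a b) (y x₀) = d := by
        rw [derivWithin_of_mem_nhds (Icc_mem_nhds (hy1 x₀).1 (hy1 x₀).2)]
        exact hslice.deriv
      rwa [heq] at h
    have hf'eq : ∀ u v : ℝ, f' (u, v) = f' (u, 0) + v * d := by
      intro u v
      have : ((u, v) : ℝ × ℝ) = (u, 0) + v • ((0 : ℝ), (1 : ℝ)) := by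
        simp [Prod.ext_iff]
      rw [this, map_add, map_smul, smul_eq_mul, hd_def]
    -- the map `Φ (x, y) = (x, X x y)` and its invertible derivative
    set Φ : ℝ × ℝ → ℝ × ℝ := fun p => (p.1, F p) with hΦ_def
    have hΦC : ContDiffAt ℝ 1 Φ p₀ := contDiffAt_fst.prodMk hF
    set A : ℝ × ℝ →L[ℝ] ℝ × ℝ := (ContinuousLinearMap.fst ℝ ℝ ℝ).prod f' with hA_def
    set C : ℝ × ℝ →L[ℝ] ℝ :=
      d⁻¹ • ((ContinuousLinearMap.snd ℝ ℝ ℝ) -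
        f'.comp ((ContinuousLinearMap.fst ℝ ℝ ℝ).prod 0)) with hC_def
    set B : ℝ × ℝ →L[ℝ] ℝ × ℝ := (ContinuousLinearMap.fst ℝ ℝ ℝ).prod C with hB_def
    have hBA : Function.LeftInverse B A := by
      intro p
      obtain ⟨u, v⟩ := p
      simp only [hA_def, hB_def, hC_def, ContinuousLinearMap.prod_apply,
        ContinuousLinearMap.coe_fst', ContinuousLinearMap.smul_apply,
        ContinuousLinearMap.coe_sub', Pi.sub_apply, ContinuousLinearMap.coe_snd',
        ContinuousLinearMap.coe_comp', Function.comp_apply,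
        ContinuousLinearMap.zero_apply, smul_eq_mul, Prod.mk.injEq]
      constructor
      · trivial
      · rw [hf'eq u v]
        field_simp
        ring
    have hAB : Function.RightInverse B A := by
      intro p
      obtain ⟨u, v⟩ := p
      simp only [hA_def, hB_def, hC_def, ContinuousLinearMap.prod_apply,
        ContinuousLinearMap.coe_fst', ContinuousLinearMap.smul_apply,
        ContinuousLinearMap.coe_sub', Pi.sub_apply, ContinuousLinearMap.coe_snd',
        ContinuousLinearMap.coe_comp', Function.comp_apply,
        ContinuousLinearMap.zero_apply, smul_eq_mul, Prod.mk.injEq]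
      constructor
      · trivial
      · rw [hf'eq u (d⁻¹ * (v - f' (u, 0)))]
        field_simp
        ring
    set A' : (ℝ × ℝ) ≃L[ℝ] (ℝ × ℝ) := ContinuousLinearEquiv.equivOfInverse A B hBA hAB
      with hA'_def
    have hdΦ : HasFDerivAt Φ (A' : ℝ × ℝ →L[ℝ] ℝ × ℝ) p₀ := by
      have : HasFDerivAt Φ A p₀ := (hasFDerivAt_fst).prodMk hdf
      exact this
    have hn : (1 : WithTop ℕ∞) ≠ 0 := one_ne_zero
    have hstrict := hΦC.hasStrictFDerivAt' hdΦ hn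
    set Ψ : ℝ × ℝ → ℝ × ℝ := hstrict.localInverse Φ A' p₀ with hΨ_def
    have hΨC : ContDiffAt ℝ 1 Ψ (Φ p₀) := hΦC.to_localInverse hdΦ hn
    have hΦp₀ : Φ p₀ = (x₀, x₀) := by
      simp only [hΦ_def, hF_def, hp₀_def]
      rw [hy2 x₀]
    -- eventually near `x₀`, `Ψ (x, x)` solves the equation and lies in the strip
    have hδcont : ContinuousAt (fun x : ℝ => ((x : ℝ), x)) x₀ :=
      (continuous_id.prodMk continuous_id).continuousAt
    have hδx₀ : (fun x : ℝ => ((x : ℝ), x)) x₀ = Φ p₀ := hΦp₀.symm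
    have hright : ∀ᶠ x in nhds x₀, Φ (Ψ (x, x)) = (x, x) := by
      have h := hstrict.eventually_right_inverse
      rw [hΦp₀] at h
      exact (hδcont.tendsto).eventually h
    have hmemIoo : ∀ᶠ x in nhds x₀, (Ψ (x, x)).2 ∈ Set.Ioo a b := by
      have hΨp₀ : Ψ (Φ p₀) = p₀ := hstrict.localInverse_apply_image
      have hΨcont : ContinuousAt Ψ (Φ p₀) := hΨC.continuousAt
      have hopen : Set.univ ×ˢ Set.Ioo a b ∈ nhds p₀ :=
        (isOpen_univ.prod isOpen_Ioo).mem_nhds ⟨Set.mem_univ _, hy1 x₀⟩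
      have h1 : ∀ᶠ q in nhds (Φ p₀), Ψ q ∈ Set.univ ×ˢ Set.Ioo a b := by
        apply hΨcont.eventually_mem
        rwa [hΨp₀]
      rw [hΦp₀] at h1
      filter_upwards [(hδcont.tendsto).eventually h1] with x hx
      exact hx.2
    have hEq : (fun x => (Ψ (x, x)).2) =ᶠ[nhds x₀] y := by
      filter_upwards [hright, hmemIoo] with x hx hmem
      have h1 : (Ψ (x, x)).1 = x := congrArg Prod.fst hx
      have h2 : X (Ψ (x, x)).1 (Ψ (x, x)).2 = x := congrArg Prod.snd hx
      rw [h1] at h2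
      exact huniq x _ (hICC hmem) _ (hICC (hy1 x)) (by rw [h2, hy2 x])
    have hgC : ContDiffAt ℝ 1 (fun x : ℝ => (Ψ (x, x)).2) x₀ := by
      have hδC : ContDiffAt ℝ 1 (fun x : ℝ => ((x : ℝ), x)) x₀ :=
        (contDiff_id.prodMk contDiff_id).contDiffAt
      have hΨC' : ContDiffAt ℝ 1 Ψ (x₀, x₀) := hΦp₀ ▸ hΨC
      have h1 : ContDiffAt ℝ 1 (Ψ ∘ fun x : ℝ => ((x : ℝ), x)) x₀ := ContDiffAt.comp (f := fun x : ℝ => ((x : ℝ), x)) x₀ hΨC' hδC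
      have h2 : ContDiffAt ℝ 1 (Prod.snd ∘ (Ψ ∘ fun x : ℝ => ((x : ℝ), x))) x₀ :=
        contDiffAt_snd.comp x₀ h1
      exact h2
    exact hgC.congr_of_eventuallyEq hEq.symm
  · -- periodicity
    intro x
    apply huniq (x + 1) _ (hICC (hy1 (x + 1))) _ (hICC (hy1 x))
    rw [hy2 (x + 1), hper x (y x) (hICC (hy1 x)), hy2 x]
  · -- uniqueness
    intro y' hy'1 hy'2
    funext x
    exact huniq x _ (hICC (hy'1 x)) _ (hICC (hy1 x)) (by rw [hy'2 x, hy2 x])
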